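/- Let C ≥ 2, 1 ≤ J ≤ C, and I ≥ 1. Let x_1,...,x_C be fixed vectors in R^d with mean x̄ and variance ν², and let ψ be a uniformly random permutation of {1,...,C}. Define p_{c,i}(k) = I-1 if k ≤ c-1 and p_{c,i}(k) = i-1 if k = c. Then ∑_{c=1}^J ∑_{i=0}^{I-1} E[‖∑_{k=1}^{c} ∑_{j=0}^{p_{c,i}(k)} (X_{ψ_k} - x̄)‖²] ≤ (1/2) J² I³ ν². -/

import Mathlib

open Finset

private lemma perm_sum_apply {n : ℕ} {M : Type*} [AddCommMonoid M] (k : Fin (n+1))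
    (f : Fin (n+1) → M) :
    ∑ ψ : Equiv.Perm (Fin (n+1)), f (ψ k) = n.factorial • ∑ j, f j := by
  have h0 : ∑ ψ : Equiv.Perm (Fin (n+1)), f (ψ k) = ∑ ψ : Equiv.Perm (Fin (n+1)), f (ψ 0) := by
    calc ∑ ψ : Equiv.Perm (Fin (n+1)), f (ψ k)
        = ∑ ψ : Equiv.Perm (Fin (n+1)), f ((ψ * Equiv.swap (0 : Fin (n+1)) k) k) :=
          (Equiv.sum_comp (Equiv.mulRight (Equiv.swap (0 : Fin (n+1)) k))
            (fun ψ => f (ψ k))).symm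
      _ = ∑ ψ : Equiv.Perm (Fin (n+1)), f (ψ 0) := by
          refine Finset.sum_congr rfl fun ψ _ => ?_
          rw [Equiv.Perm.mul_apply, Equiv.swap_apply_right]
  rw [h0, ← Equiv.sum_comp Equiv.Perm.decomposeFin.symm (fun ψ => f (ψ 0)), Fintype.sum_prod_type]
  simp only [Equiv.Perm.decomposeFin_symm_apply_zero, Finset.sum_const, Finset.card_univ,
    Fintype.card_perm, Fintype.card_fin]
  rw [← Finset.smul_sum]

private lemma perm_sum_pair {n : ℕ} {M : Type*} [AddCommGroup M] (k l : Fin (n+2)) (hkl : k ≠ l)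
    (g : Fin (n+2) → Fin (n+2) → M) :
    ∑ ψ : Equiv.Perm (Fin (n+2)), g (ψ k) (ψ l)
      = n.factorial • ∑ a, ((∑ b, g a b) - g a a) := by
  obtain ⟨τ, hτk, hτl⟩ : ∃ τ : Equiv.Perm (Fin (n+2)), τ k = 0 ∧ τ l = 1 := by
    refine ⟨(Equiv.swap (Equiv.swap k 0 l) 1) * Equiv.swap k 0, ?_, ?_⟩
    · have h1 : Equiv.swap k 0 k = 0 := Equiv.swap_apply_left _ _
      have h2 : Equiv.swap k 0 l ≠ 0 := by
        intro h
        apply hkl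
        have := congrArg (Equiv.swap k 0) h
        rw [Equiv.swap_apply_self, Equiv.swap_apply_right] at this
        exact this.symm
      rw [Equiv.Perm.mul_apply, h1]
      exact Equiv.swap_apply_of_ne_of_ne (Ne.symm h2) Fin.zero_ne_one
    · rw [Equiv.Perm.mul_apply]
      exact Equiv.swap_apply_left _ _
  have hstep : ∑ ψ : Equiv.Perm (Fin (n+2)), g (ψ k) (ψ l)
      = ∑ ψ : Equiv.Perm (Fin (n+2)), g (ψ 0) (ψ 1) := by
    calc ∑ ψ : Equiv.Perm (Fin (n+2)), g (ψ k) (ψ l)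
        = ∑ ψ : Equiv.Perm (Fin (n+2)), g ((ψ * τ) k) ((ψ * τ) l) :=
          (Equiv.sum_comp (Equiv.mulRight τ) (fun ψ => g (ψ k) (ψ l))).symm
      _ = ∑ ψ : Equiv.Perm (Fin (n+2)), g (ψ 0) (ψ 1) := by
          refine Finset.sum_congr rfl fun ψ _ => ?_
          rw [Equiv.Perm.mul_apply, Equiv.Perm.mul_apply, hτk, hτl]
  rw [hstep, ← Equiv.sum_comp Equiv.Perm.decomposeFin.symm (fun ψ => g (ψ 0) (ψ 1)),
    Fintype.sum_prod_type]
  have h1 : ∀ (p : Fin (n+2)) (e : Equiv.Perm (Fin (n+1))),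
      g ((Equiv.Perm.decomposeFin.symm (p, e)) 0) ((Equiv.Perm.decomposeFin.symm (p, e)) 1)
        = g p (Equiv.swap 0 p (e 0).succ) := by
    intro p e
    rw [Equiv.Perm.decomposeFin_symm_apply_zero, ← Fin.succ_zero_eq_one,
      Equiv.Perm.decomposeFin_symm_apply_succ]
  simp only [h1]
  have h2 : ∀ p : Fin (n+2), ∑ e : Equiv.Perm (Fin (n+1)), g p (Equiv.swap 0 p (e 0).succ)
      = n.factorial • ∑ q : Fin (n+1), g p (Equiv.swap 0 p q.succ) :=
    fun p => perm_sum_apply (n := n) 0 (fun q => g p (Equiv.swap 0 p q.succ))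
  simp only [h2]
  rw [← Finset.smul_sum]
  congr 1
  refine Finset.sum_congr rfl fun p _ => ?_
  have h3 : ∑ b : Fin (n+2), g p (Equiv.swap 0 p b) = ∑ b, g p b :=
    Equiv.sum_comp (Equiv.swap 0 p) (fun b => g p b)
  have h4 := Fin.sum_univ_succ (fun b : Fin (n+2) => g p (Equiv.swap 0 p b))
  rw [h3, Equiv.swap_apply_left] at h4
  rw [eq_sub_iff_add_eq, add_comm]
  exact h4.symm

private lemma key_exp {n d : ℕ} (y : Fin (n+2) → EuclideanSpace ℝ (Fin d))
    (hy : ∑ j, y j = 0) (w : Fin (n+2) → ℝ) (hw : ∀ k, 0 ≤ w k) :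
    ∑ ψ : Equiv.Perm (Fin (n+2)), ‖∑ k, w k • y (ψ k)‖^2
      ≤ ((n+1).factorial : ℝ) * ((∑ k, (w k)^2) * ∑ j, ‖y j‖^2) := by
  set A := ∑ j, ‖y j‖^2 with hA
  have hA0 : 0 ≤ A := Finset.sum_nonneg fun j _ => sq_nonneg _
  have expand : ∀ ψ : Equiv.Perm (Fin (n+2)), ‖∑ k, w k • y (ψ k)‖^2
      = ∑ k, ∑ l, (w k * w l) * (inner ℝ (y (ψ k)) (y (ψ l)) : ℝ) := by
    intro ψ
    rw [← real_inner_self_eq_norm_sq, sum_inner]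
    refine Finset.sum_congr rfl fun k _ => ?_
    rw [real_inner_smul_left, inner_sum, Finset.mul_sum]
    refine Finset.sum_congr rfl fun l _ => ?_
    rw [real_inner_smul_right]; ring
  simp only [expand]
  rw [Finset.sum_comm]
  have hcomm : ∀ k : Fin (n+2),
      ∑ ψ : Equiv.Perm (Fin (n+2)), ∑ l, (w k * w l) * (inner ℝ (y (ψ k)) (y (ψ l)) : ℝ)
      = ∑ l, ∑ ψ : Equiv.Perm (Fin (n+2)), (w k * w l) * (inner ℝ (y (ψ k)) (y (ψ l)) : ℝ) :=
    fun k => Finset.sum_comm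
  simp only [hcomm]
  have main : ∀ k l : Fin (n+2),
      ∑ ψ : Equiv.Perm (Fin (n+2)), (w k * w l) * (inner ℝ (y (ψ k)) (y (ψ l)) : ℝ)
        ≤ if k = l then (w k)^2 * (((n+1).factorial : ℝ) * A) else 0 := by
    intro k l
    rw [← Finset.mul_sum]
    by_cases h : k = l
    · subst h
      simp only [if_pos]
      have h1 := perm_sum_apply (n := n+1) k (fun j => (inner ℝ (y j) (y j) : ℝ))
      rw [h1, nsmul_eq_mul]
      have h2 : ∑ j, (inner ℝ (y j) (y j) : ℝ) = A := 
        Finset.sum_congr rfl fun j _ => real_inner_self_eq_norm_sq _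
      rw [h2]
      have : w k * w k = (w k)^2 := by ring
      rw [this]
    · simp only [if_neg h]
      have hp := perm_sum_pair k l h (fun a b => (inner ℝ (y a) (y b) : ℝ))
      have hz : ∀ a : Fin (n+2), (∑ b, (inner ℝ (y a) (y b) : ℝ)) - inner ℝ (y a) (y a) = -‖y a‖^2 := by
        intro a
        rw [← inner_sum, hy, inner_zero_right, real_inner_self_eq_norm_sq]
        ring
      rw [hp]
      simp only [hz]
      rw [nsmul_eq_mul]
      have hneg : (n.factorial : ℝ) * ∑ a, -‖y a‖^2 ≤ 0 := by
        rw [Finset.sum_neg_distrib]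
        have : (0:ℝ) ≤ (n.factorial : ℝ) * A := by positivity
        simpa [hA] using this
      exact mul_nonpos_of_nonneg_of_nonpos (mul_nonneg (hw k) (hw l)) hneg
  calc ∑ k, ∑ l, ∑ ψ : Equiv.Perm (Fin (n+2)), (w k * w l) * (inner ℝ (y (ψ k)) (y (ψ l)) : ℝ)
      ≤ ∑ k : Fin (n+2), ∑ l : Fin (n+2),
          (if k = l then (w k)^2 * (((n+1).factorial : ℝ) * A) else 0) :=
        Finset.sum_le_sum fun k _ => Finset.sum_le_sum fun l _ => main k l
    _ = ∑ k : Fin (n+2), (w k)^2 * (((n+1).factorial : ℝ) * A) := by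
        refine Finset.sum_congr rfl fun k _ => ?_
        rw [Finset.sum_ite_eq]
        simp
    _ = ((n+1).factorial : ℝ) * ((∑ k, (w k)^2) * A) := by
        rw [← Finset.sum_mul]; ring

set_option maxHeartbeats 1000000 in
/-- Sequential partial participation bound: for a uniformly random permutation ψ of the
C clients, with the inner double sum equal to I·∑_{k=1}^{c-1}(X_{ψ_k}-x̄) + i·(X_{ψ_c}-x̄),
the total expected squared deviation is at most (1/2)J²I³ν². -/
theorem stmt_12 {d C J I : ℕ} (hC : 2 ≤ C) (hJ1 : 1 ≤ J) (hJC : J ≤ C) (hI : 1 ≤ I)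
    (x : Fin C → EuclideanSpace ℝ (Fin d)) :
    ∑ c ∈ (Finset.Icc 1 J).attach, ∑ i ∈ Finset.range I,
        ((Nat.factorial C : ℝ))⁻¹ *
          (∑ ψ : Equiv.Perm (Fin C),
            ‖(I : ℝ) • (∑ k ∈ Finset.univ.filter (fun k : Fin C => (k : ℕ) < c.1 - 1),
                  (x (ψ k) - (C : ℝ)⁻¹ • ∑ j, x j))
              + (i : ℝ) • (x (ψ ⟨c.1 - 1, by
                    have hmem := Finset.mem_Icc.mp c.2; omega⟩)
                  - (C : ℝ)⁻¹ • ∑ j, x j)‖ ^ 2)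
      ≤ (1 / 2 : ℝ) * J ^ 2 * I ^ 3
          * ((C : ℝ)⁻¹ * ∑ k, ‖x k - (C : ℝ)⁻¹ • ∑ j, x j‖ ^ 2) := by
  obtain ⟨n, rfl⟩ : ∃ n, C = n + 2 := ⟨C - 2, by omega⟩
  set xbar : EuclideanSpace ℝ (Fin d) := ((n+2 : ℕ) : ℝ)⁻¹ • ∑ j, x j with hxbar
  set y : Fin (n+2) → EuclideanSpace ℝ (Fin d) := fun k => x k - xbar with hydef
  have hyrw : ∀ z, x z - xbar = y z := fun z => rfl
  simp only [hyrw]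
  have hysum : ∑ j, y j = 0 := by
    simp only [hydef, Finset.sum_sub_distrib, Finset.sum_const, Finset.card_univ,
      Fintype.card_fin, hxbar]
    rw [← Nat.cast_smul_eq_nsmul ℝ, smul_smul, mul_inv_cancel₀ (by positivity), one_smul,
      sub_self]
  set A := ∑ k, ‖y k‖^2 with hAdef
  have hA0 : 0 ≤ A := Finset.sum_nonneg fun j _ => sq_nonneg _
  set V : ℝ := ((n+2 : ℕ) : ℝ)⁻¹ * A with hVdef
  have hV0 : 0 ≤ V := by positivity
  -- per-term bound
  have hterm : ∀ c : {c // c ∈ Finset.Icc 1 J}, ∀ i ∈ Finset.range I,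
      ((Nat.factorial (n+2) : ℝ))⁻¹ *
          (∑ ψ : Equiv.Perm (Fin (n+2)),
            ‖(I : ℝ) • (∑ k ∈ Finset.univ.filter (fun k : Fin (n+2) => (k : ℕ) < c.1 - 1),
                  y (ψ k))
              + (i : ℝ) • (y (ψ ⟨c.1 - 1, by
                    have hmem := Finset.mem_Icc.mp c.2; omega⟩))‖ ^ 2)
        ≤ ((((c.1 - 1 : ℕ) : ℝ)) * (I:ℝ)^2 + (i:ℝ)^2) * V := by
    intro c i hi
    have hc := Finset.mem_Icc.mp c.2
    have hmn : c.1 - 1 < n + 2 := by omega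
    set m : ℕ := c.1 - 1 with hm
    set km : Fin (n+2) := ⟨m, hmn⟩ with hkm
    set w : Fin (n+2) → ℝ := fun k => if (k : ℕ) < m then (I:ℝ) else if k = km then (i:ℝ) else 0
      with hwdef
    have hw : ∀ k, 0 ≤ w k := by
      intro k; simp only [hwdef]; split_ifs <;> positivity
    have hrw : ∀ ψ : Equiv.Perm (Fin (n+2)),
        (I : ℝ) • (∑ k ∈ Finset.univ.filter (fun k : Fin (n+2) => (k : ℕ) < m), y (ψ k))
          + (i : ℝ) • y (ψ km) = ∑ k, w k • y (ψ k) := by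
      intro ψ
      have hsplit : ∀ k : Fin (n+2), w k • y (ψ k)
          = (if (k : ℕ) < m then (I:ℝ) • y (ψ k)
              else if k = km then (i:ℝ) • y (ψ k) else 0) := by
        intro k; simp only [hwdef]; split_ifs <;> simp
      simp only [hsplit]
      rw [Finset.sum_ite, Finset.sum_ite_eq', ← Finset.smul_sum]
      have hmem : km ∈ Finset.univ.filter (fun k : Fin (n+2) => ¬ ((k : ℕ) < m)) := by
        simp [hkm]
      rw [if_pos hmem]
    have hcard : (Finset.univ.filter (fun k : Fin (n+2) => (k : ℕ) < m)).card = m := by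
      rw [Finset.card_filter]
      rw [Fin.sum_univ_eq_sum_range (fun j => if j < m then (1:ℕ) else 0)]
      rw [← Finset.sum_filter]
      have : (Finset.range (n+2)).filter (fun j => j < m) = Finset.range m := by
        ext j; simp; omega
      rw [this, Finset.sum_const, Finset.card_range, smul_eq_mul, mul_one]
    have hsq : ∑ k, (w k)^2 = (m:ℝ) * (I:ℝ)^2 + (i:ℝ)^2 := by
      have hsplit : ∀ k : Fin (n+2), (w k)^2
          = (if (k : ℕ) < m then (I:ℝ)^2 else if k = km then (i:ℝ)^2 else 0) := by
        intro k; simp only [hwdef]; split_ifs <;> simp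
      simp only [hsplit]
      rw [Finset.sum_ite, Finset.sum_ite_eq', Finset.sum_const, hcard]
      have hmem : km ∈ Finset.univ.filter (fun k : Fin (n+2) => ¬ ((k : ℕ) < m)) := by
        simp [hkm]
      rw [if_pos hmem, nsmul_eq_mul]
    calc ((Nat.factorial (n+2) : ℝ))⁻¹ *
          (∑ ψ : Equiv.Perm (Fin (n+2)),
            ‖(I : ℝ) • (∑ k ∈ Finset.univ.filter (fun k : Fin (n+2) => (k : ℕ) < m), y (ψ k))
              + (i : ℝ) • y (ψ km)‖ ^ 2)
        = ((Nat.factorial (n+2) : ℝ))⁻¹ *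
          (∑ ψ : Equiv.Perm (Fin (n+2)), ‖∑ k, w k • y (ψ k)‖ ^ 2) := by
          congr 1; exact Finset.sum_congr rfl fun ψ _ => by rw [hrw]
      _ ≤ ((Nat.factorial (n+2) : ℝ))⁻¹ *
            (((n+1).factorial : ℝ) * ((∑ k, (w k)^2) * A)) := by
          refine mul_le_mul_of_nonneg_left ?_ (by positivity)
          exact key_exp y hysum w hw
      _ = ((m:ℝ) * (I:ℝ)^2 + (i:ℝ)^2) * V := by
          rw [hsq, hVdef]
          have hfac : ((n+2).factorial : ℝ) = ((n+2 : ℕ) : ℝ) * ((n+1).factorial : ℝ) := by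
            rw [Nat.factorial_succ]; push_cast; ring
          rw [hfac]
          have h1 : ((n+1).factorial : ℝ) ≠ 0 := by positivity
          have h2 : ((n+2 : ℕ) : ℝ) ≠ 0 := by positivity
          field_simp
  -- sum up
  have step1 := Finset.sum_le_sum (s := (Finset.Icc 1 J).attach)
    (fun c _ => Finset.sum_le_sum (fun i hi => hterm c i hi))
  refine le_trans step1 ?_
  -- scalar arithmetic
  have hfac : ∀ c : {c // c ∈ Finset.Icc 1 J},
      ∑ i ∈ Finset.range I, ((((c.1 - 1 : ℕ) : ℝ)) * (I:ℝ)^2 + (i:ℝ)^2) * V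
        = (((c.1 - 1 : ℕ) : ℝ) * (I:ℝ)^3 + ∑ i ∈ Finset.range I, (i:ℝ)^2) * V := by
    intro c
    rw [← Finset.sum_mul]
    congr 1
    rw [Finset.sum_add_distrib, Finset.sum_const, Finset.card_range, nsmul_eq_mul]
    ring
  simp only [hfac]
  rw [← Finset.sum_mul]
  rw [Finset.sum_attach (Finset.Icc 1 J)
    (fun c => (((c - 1 : ℕ) : ℝ) * (I:ℝ)^3 + ∑ i ∈ Finset.range I, (i:ℝ)^2))]
  set Si := ∑ i ∈ Finset.range I, (i:ℝ)^2 with hSi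
  set H := ∑ i ∈ Finset.range I, (i:ℝ) with hH
  have hH2 : H * 2 = (I:ℝ) * ((I:ℝ) - 1) := by
    have h := Finset.sum_range_id_mul_two I
    have h2 := congrArg (fun t : ℕ => (t:ℝ)) h
    push_cast [Nat.cast_sub hI] at h2
    simpa [hH] using h2
  have hSiH : Si ≤ ((I:ℝ) - 1) * H := by
    rw [hSi, hH, Finset.mul_sum]
    refine Finset.sum_le_sum fun i hi => ?_
    have : (i:ℝ) ≤ (I:ℝ) - 1 := by
      have := Finset.mem_range.mp hi
      have : (i:ℝ) + 1 ≤ (I:ℝ) := by exact_mod_cast this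
      linarith
    nlinarith [Nat.cast_nonneg (α := ℝ) i]
  have hsum_outer : ∑ c ∈ Finset.Icc 1 J, ((((c - 1 : ℕ) : ℝ)) * (I:ℝ)^3 + Si)
      = (∑ c ∈ Finset.Icc 1 J, ((c - 1 : ℕ) : ℝ)) * (I:ℝ)^3 + (J:ℝ) * Si := by
    rw [Finset.sum_add_distrib, Finset.sum_const, Nat.card_Icc, ← Finset.sum_mul,
      nsmul_eq_mul]
    norm_num
  rw [hsum_outer]
  set G := ∑ c ∈ Finset.Icc 1 J, ((c - 1 : ℕ) : ℝ) with hG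
  have hG2 : G * 2 = (J:ℝ) * ((J:ℝ) - 1) := by
    have himg : Finset.Icc 1 J = Finset.image (· + 1) (Finset.range J) := by
      ext c
      simp only [Finset.mem_Icc, Finset.mem_image, Finset.mem_range]
      constructor
      · rintro ⟨h1, h2⟩; exact ⟨c - 1, by omega, by omega⟩
      · rintro ⟨a, ha, rfl⟩; omega
    have hinj : ∀ a ∈ Finset.range J, ∀ b ∈ Finset.range J, a + 1 = b + 1 → a = b := by
      intro a _ b _ h; omega
    rw [hG, himg, Finset.sum_image hinj]
    simp only [Nat.add_sub_cancel]
    have h := Finset.sum_range_id_mul_two J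
    have h2 := congrArg (fun t : ℕ => (t:ℝ)) h
    push_cast [Nat.cast_sub hJ1] at h2
    simpa using h2
  have hI1 : (1:ℝ) ≤ (I:ℝ) := by exact_mod_cast hI
  have hJ1' : (1:ℝ) ≤ (J:ℝ) := by exact_mod_cast hJ1
  have hGv : G = (J:ℝ)*((J:ℝ)-1)/2 := by linarith
  have hHv : H = (I:ℝ)*((I:ℝ)-1)/2 := by linarith
  have hSiv : Si ≤ (I:ℝ)*((I:ℝ)-1)^2/2 := by
    calc Si ≤ ((I:ℝ) - 1) * H := hSiH
      _ = (I:ℝ)*((I:ℝ)-1)^2/2 := by rw [hHv]; ring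
  have e5 : (J:ℝ)*Si ≤ (J:ℝ)*((I:ℝ)*((I:ℝ)-1)^2/2) :=
    mul_le_mul_of_nonneg_left hSiv (by positivity)
  have e2 : ((I:ℝ)-1)^2 ≤ (I:ℝ)^2 := by nlinarith
  have e3 : (J:ℝ)*(I:ℝ)*((I:ℝ)-1)^2 ≤ (J:ℝ)*(I:ℝ)*(I:ℝ)^2 :=
    mul_le_mul_of_nonneg_left e2 (by positivity)
  have hscalar : G * (I:ℝ)^3 + (J:ℝ) * Si ≤ (1/2 : ℝ) * (J:ℝ)^2 * (I:ℝ)^3 := by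
    rw [hGv]
    nlinarith [e5, e3]
  calc (G * (I:ℝ)^3 + (J:ℝ) * Si) * V ≤ ((1/2 : ℝ) * (J:ℝ)^2 * (I:ℝ)^3) * V :=
        mul_le_mul_of_nonneg_right hscalar hV0
    _ = (1 / 2 : ℝ) * (J:ℝ)^2 * (I:ℝ)^3 * V := by ring
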